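/- arXiv:2206.03795 — 4 statements merged into one kernel-verified Lean document; each statement's English description precedes it below -/
import Mathlib

section
/- Let $N, M$ be positive integers, let $A$ be an $N imes N$ real symmetric positive definite matrix, let $B$ be an $N imes M$ real matrix, and let $P$ and $P_0$ be $M imes M$ real symmetric positive semidefinite matrices. Then $\log\det(A + BPB^T) \le \log\det(A + BP_0B^T) + \mathrm{Tr}\big(B^T(A + BP_0B^T)^{-1}B\,(P - P_0)\big)$. -/
open Matrix

/-- Trace of a real symmetric matrix equals the sum of its eigenvalues. -/
lemma trace_eq_sum_eigenvalues' {n : Type*} [Fintype n] [DecidableEq n]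
    {A : Matrix n n ℝ} (hA : A.IsHermitian) :
    A.trace = ∑ i, hA.eigenvalues i := by
  conv_lhs => rw [hA.spectral_theorem]
  rw [Unitary.conjStarAlgAut_apply, Matrix.trace_mul_comm, ← mul_assoc, Unitary.coe_star_mul_self, one_mul, trace_diagonal]
  simp

/-- Congruence by an invertible matrix preserves positive definiteness (real case). -/
lemma posDef_conj' {n : Type*} [Fintype n] [DecidableEq n]
    {T C : Matrix n n ℝ} (hT : T.PosDef) (hC : IsUnit C.det) :
    (C * T * Cᵀ).PosDef := by
  refine Matrix.PosDef.of_dotProduct_mulVec_pos ?_ (fun x hx => ?_)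
  · have hC' : Cᴴ = Cᵀ := by ext i j; simp
    have hC'' : (Cᵀ)ᴴ = C := by ext i j; simp
    show (C * T * Cᵀ)ᴴ = _
    rw [conjTranspose_mul, conjTranspose_mul, hC'', hT.isHermitian.eq, hC', ← mul_assoc]
  · have hCt : IsUnit (Cᵀ).det := by rwa [det_transpose]
    have hxn : Cᵀ *ᵥ x ≠ 0 := by
      intro h
      apply hx
      have hinj : Function.Injective (Cᵀ).mulVec :=
        mulVec_injective_iff_isUnit.mpr ((isUnit_iff_isUnit_det _).mpr hCt)
      have : Cᵀ *ᵥ x = Cᵀ *ᵥ 0 := by simpa using h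
      exact hinj this
    have := hT.dotProduct_mulVec_pos hxn
    have hs : ∀ v : n → ℝ, star v = v := fun v => by ext i; simp
    rw [hs] at this ⊢
    calc (0 : ℝ) < (Cᵀ *ᵥ x) ⬝ᵥ (T *ᵥ (Cᵀ *ᵥ x)) := this
      _ = x ⬝ᵥ ((C * T * Cᵀ) *ᵥ x) := by
          rw [← mulVec_mulVec, ← mulVec_mulVec, mulVec_transpose, ← dotProduct_mulVec]

/-- Key inequality: for a positive definite matrix, `log det ≤ trace - n`. -/
lemma logdet_le_trace_sub {n : ℕ} {Mt : Matrix (Fin n) (Fin n) ℝ} (h : Mt.PosDef) :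
    Real.log Mt.det ≤ Mt.trace - n := by
  have hev : ∀ i, 0 < h.isHermitian.eigenvalues i := h.eigenvalues_pos
  have hdet : Mt.det = ∏ i, h.isHermitian.eigenvalues i := by
    simpa using h.isHermitian.det_eq_prod_eigenvalues
  have htr : Mt.trace = ∑ i, h.isHermitian.eigenvalues i :=
    trace_eq_sum_eigenvalues' h.isHermitian
  rw [hdet, htr, Real.log_prod (fun i _ => (hev i).ne')]
  have : ∑ i, Real.log (h.isHermitian.eigenvalues i)
      ≤ ∑ i : Fin n, (h.isHermitian.eigenvalues i - 1) :=
    Finset.sum_le_sum fun i _ => Real.log_le_sub_one_of_pos (hev i)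
  simpa [Finset.sum_sub_distrib] using this

/-- Lemma 1: first-order Taylor expansion of the concave function
`P ↦ log det (A + B P Bᵀ)` gives an affine upper bound. -/
theorem logdet_affine_upper_bound {N M : ℕ} (hN : 0 < N) (hM : 0 < M)
    (A : Matrix (Fin N) (Fin N) ℝ) (B : Matrix (Fin N) (Fin M) ℝ)
    (P P₀ : Matrix (Fin M) (Fin M) ℝ)
    (hA : A.PosDef) (hP : P.PosSemidef) (hP₀ : P₀.PosSemidef) :
    Real.log (A + B * P * Bᵀ).det ≤
      Real.log (A + B * P₀ * Bᵀ).det +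
        (Bᵀ * (A + B * P₀ * Bᵀ)⁻¹ * B * (P - P₀)).trace := by
  set S := A + B * P₀ * Bᵀ with hS_def
  set T := A + B * P * Bᵀ with hT_def
  have hBt : Bᴴ = Bᵀ := by ext i j; simp
  have hS : S.PosDef := hA.add_posSemidef (hBt ▸ hP₀.mul_mul_conjTranspose_same B)
  have hT : T.PosDef := hA.add_posSemidef (hBt ▸ hP.mul_mul_conjTranspose_same B)
  -- square root of S
  set Q := (open scoped MatrixOrder in CFC.sqrt S) with hQ_def
  have hQps : Q.PosSemidef := by open scoped MatrixOrder in exact (CFC.sqrt_nonneg S).posSemidef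
  have hQQ : Q * Q = S := by open scoped MatrixOrder in exact CFC.sqrt_mul_sqrt_self S hS.posSemidef.nonneg
  have hQdet : IsUnit Q.det := by
    have : Q.det * Q.det = S.det := by rw [← det_mul, hQQ]
    have hSd := hS.det_pos
    have hQd : Q.det ≠ 0 := by
      intro h0; rw [h0, mul_zero] at this; exact hSd.ne' this.symm
    exact hQd.isUnit
  have hQsym : Qᵀ = Q := by
    have h : Qᴴ = Qᵀ := by ext i j; simp
    rw [← h, hQps.isHermitian.eq]
  have hQinv_sym : (Q⁻¹)ᵀ = Q⁻¹ := by rw [transpose_nonsing_inv, hQsym]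
  have hQinv_det : IsUnit (Q⁻¹).det := by
    rw [det_nonsing_inv]; rw [Ring.inverse_eq_inv']; exact (inv_ne_zero hQdet.ne_zero).isUnit
  set Mm := Q⁻¹ * T * Q⁻¹ with hMm_def
  have hMm : Mm.PosDef := by
    have := posDef_conj' hT hQinv_det
    rwa [hQinv_sym] at this
  have hSdet_ne : S.det ≠ 0 := hS.det_pos.ne'
  have hTdet_ne : T.det ≠ 0 := hT.det_pos.ne'
  have hQinv_det_eq : (Q⁻¹).det = (Q.det)⁻¹ := by
    rw [det_nonsing_inv, Ring.inverse_eq_inv']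
  have hdetMm : Mm.det = T.det / S.det := by
    have hQQdet : Q.det * Q.det = S.det := by rw [← det_mul, hQQ]
    rw [hMm_def, det_mul, det_mul, hQinv_det_eq]
    field_simp [← hQQdet]
    rw [← hQQdet, ← sq]; exact div_self (pow_ne_zero 2 hQdet.ne_zero)
  have hlogMm : Real.log Mm.det = Real.log T.det - Real.log S.det := by
    rw [hdetMm, Real.log_div hTdet_ne hSdet_ne]
  have hQQinv : Q⁻¹ * Q⁻¹ = S⁻¹ := by rw [← Matrix.mul_inv_rev, hQQ]
  have htrMm : Mm.trace = (S⁻¹ * T).trace := by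
    rw [hMm_def, Matrix.trace_mul_comm, ← mul_assoc, hQQinv]
  have key : Real.log Mm.det ≤ Mm.trace - N := logdet_le_trace_sub hMm
  -- rewrite the RHS trace
  have hTS : T - S = B * (P - P₀) * Bᵀ := by
    have h : B * (P - P₀) * Bᵀ = B * P * Bᵀ - B * P₀ * Bᵀ := by
      rw [Matrix.mul_sub, Matrix.sub_mul]
    rw [hT_def, hS_def, h]; abel
  have hSinvS : S⁻¹ * S = 1 := nonsing_inv_mul S hSdet_ne.isUnit
  have hrhs : (Bᵀ * S⁻¹ * B * (P - P₀)).trace = (S⁻¹ * T).trace - N := by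
    have h1 : Bᵀ * S⁻¹ * B * (P - P₀) = Bᵀ * (S⁻¹ * B * (P - P₀)) := by
      simp only [Matrix.mul_assoc]
    have h2 : (Bᵀ * (S⁻¹ * B * (P - P₀))).trace
        = (S⁻¹ * (B * (P - P₀) * Bᵀ)).trace := by
      rw [Matrix.trace_mul_comm]; simp only [Matrix.mul_assoc]
    have h3 : S⁻¹ * (B * (P - P₀) * Bᵀ) = S⁻¹ * T - S⁻¹ * S := by
      rw [← hTS, mul_sub]
    rw [h1, h2, h3, hSinvS, trace_sub, trace_one]
    simp [Fintype.card_fin]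
  rw [hrhs]
  have := hlogMm ▸ key
  rw [htrMm] at key
  rw [hlogMm] at key
  linarith
end

section
/- Let $N, M$ be positive integers, let $Y$ and $\bar Y$ be $N\times N$ complex Hermitian positive definite matrices, and let $V$ and $\bar V$ be arbitrary $N\times M$ complex matrices. Then $\log\det(I + VV^H Y^{-1}) \ge \log\det(I + \bar V\bar V^H \bar Y^{-1}) - \mathrm{Re}\,\mathrm{Tr}\big(\bar V\bar V^H\bar Y^{-1}\big) + 2\,\mathrm{Re}\,\mathrm{Tr}\big(\bar V^H\bar Y^{-1}V\big) - \mathrm{Re}\,\mathrm{Tr}\Big(\big(\bar Y^{-1} - (\bar V\bar V^H + \bar Y)^{-1}\big)^H\,(VV^H + Y)\Big)$, where both $\det(I + VV^HY^{-1})$ and $\det(I + \bar V\bar V^H\bar Y^{-1})$ are positive real numbers (so the statement compares their natural logarithms as real numbers). -/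
open Matrix ComplexOrder

section AuxLemmas

variable {K : Type*} [Fintype K] [DecidableEq K]

open scoped MatrixOrder

lemma aux_trace_eq_sum_eigenvalues {A : Matrix K K ℂ} (hA : A.IsHermitian) :
    A.trace = ∑ i, (hA.eigenvalues i : ℂ) := by
  exact hA.trace_eq_sum_eigenvalues

lemma aux_psd_trace_re_nonneg {A : Matrix K K ℂ} (hA : A.PosSemidef) :
    0 ≤ A.trace.re := by
  rw [aux_trace_eq_sum_eigenvalues hA.isHermitian, Complex.re_sum]
  refine Finset.sum_nonneg fun i _ => ?_
  simpa using hA.eigenvalues_nonneg i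

lemma aux_trace_mul_psd_nonneg {A B : Matrix K K ℂ} (hA : A.PosSemidef)
    (hB : B.PosSemidef) : 0 ≤ ((A * B).trace).re := by
  obtain ⟨C, rfl⟩ : ∃ C : Matrix K K ℂ, A = Cᴴ * C := ⟨CFC.sqrt A, by
    rw [(CFC.sqrt_nonneg A).posSemidef.isHermitian.eq, CFC.sqrt_mul_sqrt_self A hA.nonneg]⟩
  have h1 : (Cᴴ * C * B).trace = (C * B * Cᴴ).trace := by
    rw [trace_mul_cycle, trace_mul_cycle]
  rw [h1]
  exact aux_psd_trace_re_nonneg (hB.mul_mul_conjTranspose_same C)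

lemma aux_logdet_le_trace {P : Matrix K K ℂ} (hP : P.PosDef) :
    Real.log P.det.re ≤ P.trace.re - Fintype.card K := by
  have hdet : P.det.re = ∏ i, hP.isHermitian.eigenvalues i := by
    rw [hP.isHermitian.det_eq_prod_eigenvalues]
    norm_cast
  have htr : P.trace.re = ∑ i, hP.isHermitian.eigenvalues i := by
    rw [aux_trace_eq_sum_eigenvalues hP.isHermitian, Complex.re_sum]; simp
  rw [hdet, htr, Real.log_prod (fun i _ => (hP.eigenvalues_pos i).ne')]
  calc ∑ i, Real.log (hP.isHermitian.eigenvalues i)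
      ≤ ∑ i, (hP.isHermitian.eigenvalues i - 1) :=
        Finset.sum_le_sum fun i _ => Real.log_le_sub_one_of_pos (hP.eigenvalues_pos i)
    _ = _ := by rw [Finset.sum_sub_distrib]; simp

lemma aux_det_re_im {A : Matrix K K ℂ} (hA : A.PosDef) :
    0 < A.det.re ∧ A.det.im = 0 := by
  have h := hA.det_pos
  rw [Complex.lt_def] at h
  exact ⟨by simpa using h.1, by simpa using h.2.symm⟩


lemma aux_posDef_conj {E C : Matrix K K ℂ} (hE : E.PosDef) (hC : C.IsHermitian)
    (hCu : IsUnit C) : (C * E * C).PosDef := by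
  have h1 : C * E * C = Cᴴ * E * C := by rw [hC.eq]
  rw [h1]
  exact hE.conjTranspose_mul_mul_same (Matrix.mulVec_injective_iff_isUnit.mpr hCu)

lemma aux_core {W E : Matrix K K ℂ} (hW : W.PosDef) (hE : E.PosDef) :
    Real.log W.det.re + Real.log E.det.re + Fintype.card K ≤ ((W * E).trace).re := by
  set C := CFC.sqrt W with hCdef
  have hCpsd : C.PosSemidef := (CFC.sqrt_nonneg W).posSemidef
  have hCC : C * C = W := CFC.sqrt_mul_sqrt_self W hW.posSemidef.nonneg
  have hWdet : W.det ≠ 0 := hW.det_pos.ne'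
  have hCu : IsUnit C := by
    refine (isUnit_iff_isUnit_det C).mpr (IsUnit.mk0 _ fun h => hWdet ?_)
    rw [← hCC, det_mul, h, mul_zero]
  have hP : (C * E * C).PosDef := aux_posDef_conj hE hCpsd.isHermitian hCu
  have hdet : (C * E * C).det = W.det * E.det := by
    rw [det_mul, det_mul, ← hCC, det_mul]; ring
  have htr : (C * E * C).trace = (W * E).trace := by
    rw [trace_mul_cycle, hCC]
  have h := aux_logdet_le_trace hP
  rw [htr, hdet] at h
  have hWre := aux_det_re_im hW
  have hEre := aux_det_re_im hE
  have hre : (W.det * E.det).re = W.det.re * E.det.re := by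
    rw [Complex.mul_re, hWre.2, hEre.2]; ring
  rw [hre, Real.log_mul hWre.1.ne' hEre.1.ne'] at h
  linarith

end AuxLemmas

lemma aux_mul_inv_re (a b : ℂ) (ha : a.im = 0) (hb : b.im = 0) :
    (a * b⁻¹).re = a.re * (b.re)⁻¹ ∧ (a * b⁻¹).im = 0 := by
  have ha' : a = (a.re : ℂ) := Complex.ext rfl ha
  have hb' : b = (b.re : ℂ) := Complex.ext rfl hb
  rw [ha', hb', ← Complex.ofReal_inv, ← Complex.ofReal_mul]
  simp

/-- Lemma 2 of the paper (complex case): lower bound on `log det (I + V Vᴴ Y⁻¹)`.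
Both determinants are positive real numbers, and the inequality compares their
natural logarithms (taken of the real parts, the imaginary parts being zero). -/
theorem logdet_lower_bound_complex {N M : ℕ} (hN : 0 < N) (hM : 0 < M)
    (Y Ybar : Matrix (Fin N) (Fin N) ℂ) (V Vbar : Matrix (Fin N) (Fin M) ℂ)
    (hY : Y.PosDef) (hYbar : Ybar.PosDef) :
    0 < ((1 + V * Vᴴ * Y⁻¹).det).re ∧ ((1 + V * Vᴴ * Y⁻¹).det).im = 0 ∧
    0 < ((1 + Vbar * Vbarᴴ * Ybar⁻¹).det).re ∧
    ((1 + Vbar * Vbarᴴ * Ybar⁻¹).det).im = 0 ∧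
    Real.log ((1 + V * Vᴴ * Y⁻¹).det).re ≥
      Real.log ((1 + Vbar * Vbarᴴ * Ybar⁻¹).det).re
        - ((Vbar * Vbarᴴ * Ybar⁻¹).trace).re
        + 2 * ((Vbarᴴ * Ybar⁻¹ * V).trace).re
        - (((Ybar⁻¹ - (Vbar * Vbarᴴ + Ybar)⁻¹)ᴴ * (V * Vᴴ + Y)).trace).re := by
  set S : Matrix (Fin N) (Fin N) ℂ := V * Vᴴ + Y with hSdef
  set Sb : Matrix (Fin N) (Fin N) ℂ := Vbar * Vbarᴴ + Ybar with hSbdef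
  have hS : S.PosDef := Matrix.PosDef.posSemidef_add (posSemidef_self_mul_conjTranspose V) hY
  have hSb : Sb.PosDef := Matrix.PosDef.posSemidef_add (posSemidef_self_mul_conjTranspose Vbar) hYbar
  haveI := hY.isUnit.invertible
  haveI := hYbar.isUnit.invertible
  haveI := hS.isUnit.invertible
  haveI := hSb.isUnit.invertible
  -- determinant identities
  have h1 : S * Y⁻¹ = 1 + V * Vᴴ * Y⁻¹ := by
    rw [hSdef, Matrix.add_mul, Matrix.mul_inv_of_invertible, add_comm]
  have h1b : Sb * Ybar⁻¹ = 1 + Vbar * Vbarᴴ * Ybar⁻¹ := by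
    rw [hSbdef, Matrix.add_mul, Matrix.mul_inv_of_invertible, add_comm]
  have hdet1 : (1 + V * Vᴴ * Y⁻¹).det = S.det * Y.det⁻¹ := by
    rw [← h1, det_mul, det_nonsing_inv, Ring.inverse_eq_inv']
  have hdet1b : (1 + Vbar * Vbarᴴ * Ybar⁻¹).det = Sb.det * Ybar.det⁻¹ := by
    rw [← h1b, det_mul, det_nonsing_inv, Ring.inverse_eq_inv']
  have hYr := aux_det_re_im hY
  have hYbr := aux_det_re_im hYbar
  have hSr := aux_det_re_im hS
  have hSbr := aux_det_re_im hSb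
  have hq1 := aux_mul_inv_re S.det Y.det hSr.2 hYr.2
  have hq1b := aux_mul_inv_re Sb.det Ybar.det hSbr.2 hYbr.2
  refine ⟨?_, ?_, ?_, ?_, ?_⟩
  · rw [hdet1, hq1.1]; exact mul_pos hSr.1 (inv_pos.mpr hYr.1)
  · rw [hdet1, hq1.2]
  · rw [hdet1b, hq1b.1]; exact mul_pos hSbr.1 (inv_pos.mpr hYbr.1)
  · rw [hdet1b, hq1b.2]
  -- main inequality
  set F : Matrix (Fin M) (Fin M) ℂ := 1 + Vᴴ * Y⁻¹ * V with hFdef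
  set W0 : Matrix (Fin M) (Fin M) ℂ := 1 + Vbarᴴ * Ybar⁻¹ * Vbar with hWdef
  set E : Matrix (Fin M) (Fin M) ℂ := 1 - Vᴴ * S⁻¹ * V with hEdef
  set U0 : Matrix (Fin N) (Fin M) ℂ := Sb⁻¹ * Vbar with hUdef
  set D : Matrix (Fin N) (Fin M) ℂ := U0 - S⁻¹ * V with hDdef
  set EU : Matrix (Fin M) (Fin M) ℂ := 1 - U0ᴴ * V - Vᴴ * U0 + U0ᴴ * S * U0 with hEUdef
  have hF : F.PosDef := Matrix.PosDef.add_posSemidef Matrix.PosDef.one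
    ((hY.inv.posSemidef).conjTranspose_mul_mul_same V)
  have hW0 : W0.PosDef := Matrix.PosDef.add_posSemidef Matrix.PosDef.one
    ((hYbar.inv.posSemidef).conjTranspose_mul_mul_same Vbar)
  -- key cancellation identities
  have hVVh : V * Vᴴ = S - Y := (add_sub_cancel_right _ _).symm
  have hVVhb : Vbar * Vbarᴴ = Sb - Ybar := (add_sub_cancel_right _ _).symm
  have hkey3 : Y⁻¹ * (V * (Vᴴ * (S⁻¹ * V))) = Y⁻¹ * V - S⁻¹ * V := by
    have h : Y⁻¹ * (V * Vᴴ) * S⁻¹ = Y⁻¹ - S⁻¹ := by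
      rw [hVVh, Matrix.mul_sub, Matrix.sub_mul, Matrix.mul_assoc,
        Matrix.mul_inv_of_invertible, Matrix.mul_one, Matrix.inv_mul_of_invertible,
        Matrix.one_mul]
    have h2 := congrArg (· * V) h
    simp only [Matrix.sub_mul, Matrix.mul_assoc] at h2 ⊢
    exact h2
  have hkeyb : Sb⁻¹ * (Vbar * (Vbarᴴ * Ybar⁻¹)) = Ybar⁻¹ - Sb⁻¹ := by
    have h : Sb⁻¹ * (Vbar * Vbarᴴ) * Ybar⁻¹ = Ybar⁻¹ - Sb⁻¹ := by
      rw [hVVhb, Matrix.mul_sub, Matrix.sub_mul, Matrix.inv_mul_of_invertible,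
        Matrix.one_mul, Matrix.mul_assoc, Matrix.mul_inv_of_invertible, Matrix.mul_one]
    simp only [Matrix.mul_assoc] at h
    exact h
  -- F * E = 1, hence E is positive definite
  have hFE : F * E = 1 := by
    rw [hFdef, hEdef]
    simp only [Matrix.add_mul, Matrix.mul_sub, Matrix.sub_mul, Matrix.one_mul,
      Matrix.mul_one, Matrix.mul_assoc]
    rw [hkey3]
    simp only [Matrix.mul_sub]
    abel
  have hE : E.PosDef := by
    rw [show E = F⁻¹ from (Matrix.inv_eq_right_inv hFE).symm]
    exact hF.inv
  -- determinant of E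
  have hdetE : E.det = Y.det * S.det⁻¹ := by
    have h2 : (1 : Matrix (Fin N) (Fin N) ℂ) - S⁻¹ * (V * Vᴴ) = S⁻¹ * Y := by
      rw [hVVh, Matrix.mul_sub, Matrix.inv_mul_of_invertible, sub_sub_cancel]
    rw [hEdef, Matrix.mul_assoc, det_one_sub_mul_comm, Matrix.mul_assoc, h2,
      det_mul, det_nonsing_inv, Ring.inverse_eq_inv', mul_comm]
  -- determinant of the bar term equals det W0
  have hdetW : (1 + Vbar * Vbarᴴ * Ybar⁻¹).det = W0.det := by
    rw [Matrix.mul_assoc, det_one_add_mul_comm, hWdef, Matrix.mul_assoc]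
  -- structural identities for U0, W0
  have hUH : U0ᴴ = Vbarᴴ * Sb⁻¹ := by
    rw [hUdef, conjTranspose_mul, (hSb.isHermitian.inv).eq]
  have hWUH : W0 * U0ᴴ = Vbarᴴ * Ybar⁻¹ := by
    rw [hUH]
    have hWV : W0 * Vbarᴴ = Vbarᴴ * (Ybar⁻¹ * Sb) := by
      rw [hWdef, hSbdef]
      simp only [Matrix.add_mul, Matrix.mul_add, Matrix.one_mul, Matrix.mul_assoc,
        Matrix.inv_mul_of_invertible, Matrix.mul_one]
      abel
    rw [← Matrix.mul_assoc, hWV]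
    simp only [Matrix.mul_assoc, Matrix.mul_inv_of_invertible, Matrix.mul_one]
  have hUWUH : U0 * (W0 * U0ᴴ) = Ybar⁻¹ - Sb⁻¹ := by
    rw [hWUH, hUdef, Matrix.mul_assoc]
    exact hkeyb
  have hUW : U0 * W0 = Ybar⁻¹ * Vbar := by
    have h := congrArg conjTranspose hWUH
    simp only [conjTranspose_mul, conjTranspose_conjTranspose, hW0.isHermitian.eq,
      (hYbar.isHermitian.inv).eq] at h
    exact h
  -- trace identities
  have t_a : (W0 * (U0ᴴ * V)).trace = (Vbarᴴ * Ybar⁻¹ * V).trace := by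
    rw [← Matrix.mul_assoc, hWUH]
  have t_b : (W0 * (Vᴴ * U0)).trace = star ((Vbarᴴ * Ybar⁻¹ * V).trace) := by
    rw [trace_mul_comm, Matrix.mul_assoc, hUW, ← trace_conjTranspose]
    congr 1
    simp only [conjTranspose_mul, conjTranspose_conjTranspose, (hYbar.isHermitian.inv).eq,
      Matrix.mul_assoc]
  have t_c : (W0 * (U0ᴴ * (S * U0))).trace = ((Ybar⁻¹ - Sb⁻¹) * S).trace := by
    rw [← Matrix.mul_assoc, trace_mul_comm, Matrix.mul_assoc, hUWUH, trace_mul_comm]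
  have t_d : W0.trace = (M : ℂ) + (Vbar * Vbarᴴ * Ybar⁻¹).trace := by
    rw [hWdef, trace_add, trace_one, trace_mul_cycle]
    simp
  have hWEU : W0 * EU = W0 - W0 * (U0ᴴ * V) - W0 * (Vᴴ * U0) + W0 * (U0ᴴ * (S * U0)) := by
    rw [hEUdef]
    simp only [Matrix.mul_sub, Matrix.mul_add, Matrix.mul_one, Matrix.mul_assoc]
  have htrace : (W0 * EU).trace = (M : ℂ) + (Vbar * Vbarᴴ * Ybar⁻¹).trace
      - ((Vbarᴴ * Ybar⁻¹ * V).trace + star ((Vbarᴴ * Ybar⁻¹ * V).trace))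
      + ((Ybar⁻¹ - Sb⁻¹) * S).trace := by
    rw [hWEU, trace_add, trace_sub, trace_sub, t_a, t_b, t_c, t_d]
    ring
  -- gap identity
  have hDH : Dᴴ = U0ᴴ - Vᴴ * S⁻¹ := by
    rw [hDdef]
    simp only [conjTranspose_sub, conjTranspose_mul, (hS.isHermitian.inv).eq]
  have hgap : EU = E + Dᴴ * S * D := by
    rw [hEUdef, hEdef, hDH, hDdef]
    simp only [Matrix.sub_mul, Matrix.mul_sub, Matrix.mul_assoc,
      Matrix.mul_inv_cancel_left_of_invertible, Matrix.inv_mul_cancel_left_of_invertible]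
    abel
  have hgapineq : 0 ≤ ((W0 * (Dᴴ * S * D)).trace).re :=
    aux_trace_mul_psd_nonneg hW0.posSemidef (hS.posSemidef.conjTranspose_mul_mul_same D)
  have htr_ge : ((W0 * E).trace).re ≤ ((W0 * EU).trace).re := by
    have h : W0 * EU = W0 * E + W0 * (Dᴴ * S * D) := by rw [hgap, Matrix.mul_add]
    rw [h, trace_add, Complex.add_re]
    linarith
  have hcore := aux_core hW0 hE
  -- real-number bookkeeping
  have hWr := aux_det_re_im hW0
  have hEr := aux_mul_inv_re Y.det S.det hYr.2 hSr.2
  have hlogE : Real.log E.det.re = Real.log Y.det.re - Real.log S.det.re := by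
    rw [hdetE, hEr.1, Real.log_mul hYr.1.ne' (inv_ne_zero hSr.1.ne'), Real.log_inv,
      sub_eq_add_neg]
  have hlogL : Real.log ((1 + V * Vᴴ * Y⁻¹).det).re
      = Real.log S.det.re - Real.log Y.det.re := by
    rw [hdet1, hq1.1, Real.log_mul hSr.1.ne' (inv_ne_zero hYr.1.ne'), Real.log_inv,
      sub_eq_add_neg]
  have hAH : (Ybar⁻¹ - Sb⁻¹)ᴴ = Ybar⁻¹ - Sb⁻¹ := by
    rw [conjTranspose_sub, (hYbar.isHermitian.inv).eq, (hSb.isHermitian.inv).eq]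
  rw [ge_iff_le, hdetW, hlogL, hAH]
  have htrace_re : ((W0 * EU).trace).re = (M : ℝ) + ((Vbar * Vbarᴴ * Ybar⁻¹).trace).re
      - 2 * ((Vbarᴴ * Ybar⁻¹ * V).trace).re + (((Ybar⁻¹ - Sb⁻¹) * S).trace).re := by
    rw [htrace]
    simp [Complex.add_re, Complex.sub_re, Complex.conj_re]
    ring
  have hcard : (Fintype.card (Fin M) : ℝ) = (M : ℝ) := by simp
  rw [hcard] at hcore
  linarith [hcore, htr_ge, htrace_re, hlogE]
end

section
/- Let $N, M$ be positive integers, let $Y$ and $\bar Y$ be $N\times N$ real symmetric positive definite matrices, and let $V$ and $\bar V$ be arbitrary $N\times M$ real matrices. Then $\log\det(I + VV^T Y^{-1}) \ge \log\det(I + \bar V\bar V^T \bar Y^{-1}) - \mathrm{Tr}\big(\bar V\bar V^T\bar Y^{-1}\big) + 2\,\mathrm{Tr}\big(\bar V^T\bar Y^{-1}V\big) - \mathrm{Tr}\Big(\big(\bar Y^{-1} - (\bar V\bar V^T + \bar Y)^{-1}\big)^T\,(VV^T + Y)\Big)$. -/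
open Matrix

variable {n : Type*} [Fintype n] [DecidableEq n]

lemma trace_nonneg_of_posSemidef {A : Matrix n n ℝ} (hA : A.PosSemidef) : 0 ≤ A.trace := by
  rw [Matrix.trace]
  apply Finset.sum_nonneg
  intro i _
  have := hA.dotProduct_mulVec_nonneg (Pi.single i 1)
  simpa [dotProduct, mulVec_single, Pi.single_apply] using this

open scoped MatrixOrder in
lemma trace_mul_nonneg_of_posSemidef {A B : Matrix n n ℝ} (hA : A.PosSemidef)
    (hB : B.PosSemidef) : 0 ≤ (A * B).trace := by
  set S := CFC.sqrt B with hS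
  have hSS : S * S = B := CFC.sqrt_mul_sqrt_self B hB.nonneg
  have h1 : (A * B).trace = (Sᴴ * A * S).trace := by
    rw [← hSS, (CFC.sqrt_nonneg B).posSemidef.isHermitian.eq, ← Matrix.mul_assoc,
      Matrix.trace_mul_cycle]
  rw [h1]
  exact trace_nonneg_of_posSemidef (hA.conjTranspose_mul_mul_same S)

lemma log_det_le_trace_sub_card {C : Matrix n n ℝ} (hC : C.PosDef) :
    Real.log C.det ≤ C.trace - Fintype.card n := by
  have hdet : C.det = ∏ i, hC.isHermitian.eigenvalues i := by
    simpa using hC.isHermitian.det_eq_prod_eigenvalues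
  have htr : C.trace = ∑ i, hC.isHermitian.eigenvalues i := by
    rw [hC.isHermitian.trace_eq_sum_eigenvalues]
    simp
  rw [hdet, htr, Real.log_prod (fun i _ => (hC.eigenvalues_pos i).ne')]
  have : ∀ i ∈ Finset.univ, Real.log (hC.isHermitian.eigenvalues i)
      ≤ hC.isHermitian.eigenvalues i - 1 :=
    fun i _ => Real.log_le_sub_one_of_pos (hC.eigenvalues_pos i)
  calc ∑ i, Real.log (hC.isHermitian.eigenvalues i)
      ≤ ∑ i, (hC.isHermitian.eigenvalues i - 1) := Finset.sum_le_sum this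
    _ = (∑ i, hC.isHermitian.eigenvalues i) - Fintype.card n := by
        rw [Finset.sum_sub_distrib]; simp [Finset.card_univ]

lemma posDef_conj_of_isUnit {W B : Matrix n n ℝ} (hW : W.PosDef) (hB : IsUnit B) :
    (Bᵀ * W * B).PosDef := by
  refine Matrix.PosDef.of_dotProduct_mulVec_pos ?_ (fun x hx => ?_)
  · have hWs : Wᵀ = W := by
      have := hW.isHermitian.eq
      rwa [conjTranspose_eq_transpose_of_trivial] at this
    unfold Matrix.IsHermitian
    rw [conjTranspose_eq_transpose_of_trivial]
    rw [transpose_mul, transpose_mul, transpose_transpose, hWs, Matrix.mul_assoc]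
  · have hBx : B *ᵥ x ≠ 0 := by
      have hinj : Function.Injective (B.mulVec) := mulVec_injective_iff_isUnit.mpr hB
      intro h
      exact hx (hinj (by simpa using h))
    have key : star x ⬝ᵥ (Bᵀ * W * B) *ᵥ x = star (B *ᵥ x) ⬝ᵥ W *ᵥ (B *ᵥ x) := by
      simp only [star_trivial, ← mulVec_mulVec]
      rw [dotProduct_mulVec x Bᵀ, vecMul_transpose]
    rw [key]
    exact hW.dotProduct_mulVec_pos hBx

open scoped MatrixOrder in
lemma neg_log_det_ge {X W : Matrix n n ℝ} (hX : X.PosDef) (hW : W.PosDef) :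
    Real.log W.det + (Fintype.card n : ℝ) - (W * X).trace ≤ - Real.log X.det := by
  set S := CFC.sqrt X with hSdef
  have hSS : S * S = X := CFC.sqrt_mul_sqrt_self X hX.posSemidef.nonneg
  have hSsymm : Sᵀ = S := by
    have := (CFC.sqrt_nonneg X).posSemidef.isHermitian.eq
    rwa [conjTranspose_eq_transpose_of_trivial] at this
  have hdet2 : S.det * S.det = X.det := by rw [← Matrix.det_mul, hSS]
  have hSdetne : S.det ≠ 0 := by
    intro h
    rw [h, mul_zero] at hdet2
    exact hX.det_pos.ne' hdet2.symm
  have hSunit : IsUnit S := (Matrix.isUnit_iff_isUnit_det S).mpr hSdetne.isUnit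
  have hC : (Sᵀ * W * S).PosDef := posDef_conj_of_isUnit hW hSunit
  have h1 := log_det_le_trace_sub_card hC
  have hdetC : (Sᵀ * W * S).det = X.det * W.det := by
    rw [Matrix.det_mul, Matrix.det_mul, det_transpose]
    rw [← hdet2]; ring
  have htrC : (Sᵀ * W * S).trace = (W * X).trace := by
    rw [hSsymm, Matrix.trace_mul_cycle, hSS, Matrix.trace_mul_comm]
  rw [hdetC, htrC, Real.log_mul hX.det_pos.ne' hW.det_pos.ne'] at h1
  linarith

lemma psd_conj_real {m' : Type*} [Fintype m'] {A : Matrix n n ℝ} (hA : A.PosSemidef)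
    (B : Matrix n m' ℝ) : (Bᵀ * A * B).PosSemidef := by
  have := hA.conjTranspose_mul_mul_same B
  rwa [conjTranspose_eq_transpose_of_trivial] at this

lemma psd_self_mul_transpose {m' : Type*} [Fintype m'] (A : Matrix n m' ℝ) :
    (A * Aᵀ).PosSemidef := by
  have := posSemidef_self_mul_conjTranspose A
  rwa [conjTranspose_eq_transpose_of_trivial] at this

lemma symm_of_posDef {A : Matrix n n ℝ} (hA : A.PosDef) : Aᵀ = A := by
  have := hA.isHermitian.eq
  rwa [conjTranspose_eq_transpose_of_trivial] at this

lemma mul_cancel_left' {k : Type*} [Fintype k] {B C : Matrix n n ℝ} (h : B * C = 1)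
    (t : Matrix n k ℝ) : B * (C * t) = t := by
  rw [← Matrix.mul_assoc, h, Matrix.one_mul]

set_option maxHeartbeats 1000000 in
/-- Real-matrix specialization of Lemma 2 of the paper:
lower bound on `log det (I + V Vᵀ Y⁻¹)`. -/
theorem logdet_lower_bound_real {N M : ℕ} (hN : 0 < N) (hM : 0 < M)
    (Y Ybar : Matrix (Fin N) (Fin N) ℝ) (V Vbar : Matrix (Fin N) (Fin M) ℝ)
    (hY : Y.PosDef) (hYbar : Ybar.PosDef) :
    Real.log (1 + V * Vᵀ * Y⁻¹).det ≥
      Real.log (1 + Vbar * Vbarᵀ * Ybar⁻¹).det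
        - (Vbar * Vbarᵀ * Ybar⁻¹).trace
        + 2 * (Vbarᵀ * Ybar⁻¹ * V).trace
        - ((Ybar⁻¹ - (Vbar * Vbarᵀ + Ybar)⁻¹)ᵀ * (V * Vᵀ + Y)).trace := by
  set A := V * Vᵀ + Y with hAdef
  set Ab := Vbar * Vbarᵀ + Ybar with hAbdef
  have hA : A.PosDef := Matrix.PosDef.posSemidef_add (psd_self_mul_transpose V) hY
  have hAb : Ab.PosDef := Matrix.PosDef.posSemidef_add (psd_self_mul_transpose Vbar) hYbar
  have hAA : A * A⁻¹ = 1 := Matrix.mul_nonsing_inv _ hA.det_pos.ne'.isUnit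
  have hAA' : A⁻¹ * A = 1 := Matrix.nonsing_inv_mul _ hA.det_pos.ne'.isUnit
  have hAbAb' : Ab⁻¹ * Ab = 1 := Matrix.nonsing_inv_mul _ hAb.det_pos.ne'.isUnit
  have hYY : Y⁻¹ * Y = 1 := Matrix.nonsing_inv_mul _ hY.det_pos.ne'.isUnit
  have hYbYb : Ybar⁻¹ * Ybar = 1 := Matrix.nonsing_inv_mul _ hYbar.det_pos.ne'.isUnit
  have hYbYb' : Ybar * Ybar⁻¹ = 1 := Matrix.mul_nonsing_inv _ hYbar.det_pos.ne'.isUnit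
  have hAinvsymm : (A⁻¹)ᵀ = A⁻¹ := by
    rw [Matrix.transpose_nonsing_inv, symm_of_posDef hA]
  have hAbinvsymm : (Ab⁻¹)ᵀ = Ab⁻¹ := by
    rw [Matrix.transpose_nonsing_inv, symm_of_posDef hAb]
  have hYbinvsymm : (Ybar⁻¹)ᵀ = Ybar⁻¹ := by
    rw [Matrix.transpose_nonsing_inv, symm_of_posDef hYbar]
  set P := 1 + Vᵀ * Y⁻¹ * V with hPdef
  set Pb := 1 + Vbarᵀ * Ybar⁻¹ * Vbar with hPbdef
  have hP : P.PosDef :=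
    Matrix.PosDef.add_posSemidef Matrix.PosDef.one (psd_conj_real hY.inv.posSemidef V)
  have hPb : Pb.PosDef :=
    Matrix.PosDef.add_posSemidef Matrix.PosDef.one (psd_conj_real hYbar.inv.posSemidef Vbar)
  -- determinant identities
  have hdet1 : (1 + V * Vᵀ * Y⁻¹).det = P.det := by
    rw [hPdef, Matrix.mul_assoc, Matrix.det_one_add_mul_comm, Matrix.mul_assoc]
  have hdet2 : (1 + Vbar * Vbarᵀ * Ybar⁻¹).det = Pb.det := by
    rw [hPbdef, Matrix.mul_assoc, Matrix.det_one_add_mul_comm, Matrix.mul_assoc]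
  have hVV : V * Vᵀ = A - Y := by rw [hAdef, add_sub_cancel_right]
  have hVVb : Vbar * Vbarᵀ = Ab - Ybar := by rw [hAbdef, add_sub_cancel_right]
  -- key receiver identity
  have keyP : P * (Vᵀ * A⁻¹) = Vᵀ * Y⁻¹ := by
    rw [hPdef, Matrix.add_mul, Matrix.one_mul]
    have h1 : Vᵀ * Y⁻¹ * V * (Vᵀ * A⁻¹) = Vᵀ * (Y⁻¹ * ((A - Y) * A⁻¹)) := by
      rw [← hVV]; simp only [Matrix.mul_assoc]
    have h2 : (A - Y) * A⁻¹ = 1 - Y * A⁻¹ := by rw [Matrix.sub_mul, hAA]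
    have h3 : Y⁻¹ * (1 - Y * A⁻¹) = Y⁻¹ - A⁻¹ := by
      rw [Matrix.mul_sub, Matrix.mul_one, ← Matrix.mul_assoc, hYY, Matrix.one_mul]
    rw [h1, h2, h3, Matrix.mul_sub]
    abel
  have keyPb : Pb * (Vbarᵀ * Ab⁻¹) = Vbarᵀ * Ybar⁻¹ := by
    rw [hPbdef, Matrix.add_mul, Matrix.one_mul]
    have h1 : Vbarᵀ * Ybar⁻¹ * Vbar * (Vbarᵀ * Ab⁻¹)
        = Vbarᵀ * (Ybar⁻¹ * ((Ab - Ybar) * Ab⁻¹)) := by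
      rw [← hVVb]; simp only [Matrix.mul_assoc]
    have h2 : (Ab - Ybar) * Ab⁻¹ = 1 - Ybar * Ab⁻¹ := by
      rw [Matrix.sub_mul, Matrix.mul_nonsing_inv _ hAb.det_pos.ne'.isUnit]
    have h3 : Ybar⁻¹ * (1 - Ybar * Ab⁻¹) = Ybar⁻¹ - Ab⁻¹ := by
      rw [Matrix.mul_sub, Matrix.mul_one, ← Matrix.mul_assoc, hYbYb, Matrix.one_mul]
    rw [h1, h2, h3, Matrix.mul_sub]
    abel
  set Emin := (1 : Matrix (Fin M) (Fin M) ℝ) - Vᵀ * A⁻¹ * V with hEmindef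
  have hPE : P * Emin = 1 := by
    rw [hEmindef, Matrix.mul_sub, Matrix.mul_one]
    have h1 : P * (Vᵀ * A⁻¹ * V) = Vᵀ * Y⁻¹ * V := by
      rw [← Matrix.mul_assoc, keyP]
    rw [h1, hPdef]
    abel
  have hEmin : Emin.PosDef := by
    have hinv : P⁻¹ = Emin := Matrix.inv_eq_right_inv hPE
    rw [← hinv]; exact hP.inv
  set G := Ab⁻¹ * Vbar with hGdef
  set D := G - A⁻¹ * V with hDdef
  set E := 1 - Gᵀ * V - Vᵀ * G + Gᵀ * A * G with hEdef
  have hDt : Dᵀ = Gᵀ - Vᵀ * A⁻¹ := by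
    rw [hDdef, transpose_sub, transpose_mul A⁻¹ V, hAinvsymm]
  have hEsub : E - Emin = Dᵀ * A * D := by
    rw [hEdef, hEmindef, hDt, hDdef]
    have c1 : (Gᵀ - Vᵀ * A⁻¹) * A = Gᵀ * A - Vᵀ := by
      rw [Matrix.sub_mul, Matrix.mul_assoc, hAA', Matrix.mul_one]
    rw [c1, Matrix.sub_mul, Matrix.mul_sub, Matrix.mul_sub,
      Matrix.mul_assoc Gᵀ A (A⁻¹ * V), mul_cancel_left' hAA V,
      ← Matrix.mul_assoc Vᵀ A⁻¹ V]
    abel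
  have hDAD : (Dᵀ * A * D).PosSemidef := psd_conj_real hA.posSemidef D
  have hE : E.PosDef := by
    have h : E = Emin + Dᵀ * A * D := by rw [← hEsub]; abel
    rw [h]; exact hEmin.add_posSemidef hDAD
  have hPbE : 0 ≤ (Pb * E).trace - (Pb * Emin).trace := by
    have h0 : 0 ≤ (Pb * (E - Emin)).trace :=
      hEsub ▸ trace_mul_nonneg_of_posSemidef hPb.posSemidef hDAD
    rwa [Matrix.mul_sub, trace_sub] at h0
  have hconv := neg_log_det_ge hEmin hPb
  have hcard : ((Fintype.card (Fin M) : ℕ) : ℝ) = (M : ℝ) := by simp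
  rw [hcard] at hconv
  have hlog0 : Real.log P.det + Real.log Emin.det = 0 := by
    rw [← Real.log_mul hP.det_pos.ne' hEmin.det_pos.ne', ← Matrix.det_mul, hPE,
      Matrix.det_one, Real.log_one]
  -- trace computations
  have hGt : Gᵀ = Vbarᵀ * Ab⁻¹ := by rw [hGdef, transpose_mul, hAbinvsymm]
  have hPbGt : Pb * Gᵀ = Vbarᵀ * Ybar⁻¹ := by rw [hGt, keyPb]
  have hPbsymm : Pbᵀ = Pb := by
    rw [hPbdef]
    simp only [transpose_add, transpose_one, transpose_mul, transpose_transpose,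
      hYbinvsymm, Matrix.mul_assoc]
  have ta : (Pb * (Gᵀ * V)).trace = (Vbarᵀ * Ybar⁻¹ * V).trace := by
    rw [← Matrix.mul_assoc, hPbGt]
  have tb : (Pb * (Vᵀ * G)).trace = (Vbarᵀ * Ybar⁻¹ * V).trace := by
    have h : (Pb * (Vᵀ * G))ᵀ = Gᵀ * V * Pb := by
      rw [transpose_mul, transpose_mul, transpose_transpose, hPbsymm, Matrix.mul_assoc]
    rw [← trace_transpose (Pb * (Vᵀ * G)), h, Matrix.trace_mul_comm, ← Matrix.mul_assoc,
      hPbGt]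
  have tc : (Pb * (Gᵀ * A * G)).trace = ((Ybar⁻¹ - Ab⁻¹) * A).trace := by
    have e1 : Pb * (Gᵀ * A * G) = Vbarᵀ * Ybar⁻¹ * A * G := by
      calc Pb * (Gᵀ * A * G) = Pb * Gᵀ * (A * G) := by simp only [Matrix.mul_assoc]
        _ = Vbarᵀ * Ybar⁻¹ * A * G := by rw [hPbGt]; simp only [Matrix.mul_assoc]
    have e2 : G * (Vbarᵀ * Ybar⁻¹ * A) = (Ybar⁻¹ - Ab⁻¹) * A := by
      have h1 : Ab⁻¹ * (Vbar * Vbarᵀ) = 1 - Ab⁻¹ * Ybar := by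
        rw [hVVb, Matrix.mul_sub, hAbAb']
      calc G * (Vbarᵀ * Ybar⁻¹ * A)
          = Ab⁻¹ * (Vbar * Vbarᵀ) * (Ybar⁻¹ * A) := by
            rw [hGdef]; simp only [Matrix.mul_assoc]
        _ = (1 - Ab⁻¹ * Ybar) * (Ybar⁻¹ * A) := by rw [h1]
        _ = Ybar⁻¹ * A - Ab⁻¹ * (Ybar * (Ybar⁻¹ * A)) := by
            rw [Matrix.sub_mul, Matrix.one_mul, Matrix.mul_assoc]
        _ = (Ybar⁻¹ - Ab⁻¹) * A := by
            rw [mul_cancel_left' hYbYb' A, Matrix.sub_mul]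
    rw [e1, Matrix.trace_mul_comm, e2]
  have td : Pb.trace = (M : ℝ) + (Vbar * Vbarᵀ * Ybar⁻¹).trace := by
    have h : (Vbarᵀ * Ybar⁻¹ * Vbar).trace = (Vbar * Vbarᵀ * Ybar⁻¹).trace := by
      rw [Matrix.mul_assoc Vbarᵀ Ybar⁻¹ Vbar, Matrix.trace_mul_comm Vbarᵀ (Ybar⁻¹ * Vbar),
        Matrix.mul_assoc Ybar⁻¹ Vbar Vbarᵀ, Matrix.trace_mul_comm Ybar⁻¹ (Vbar * Vbarᵀ)]
    rw [hPbdef, trace_add, trace_one, h, Fintype.card_fin]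
  have h4 : (Pb * E).trace = (M : ℝ) + (Vbar * Vbarᵀ * Ybar⁻¹).trace
      - 2 * (Vbarᵀ * Ybar⁻¹ * V).trace + ((Ybar⁻¹ - Ab⁻¹) * A).trace := by
    rw [hEdef, Matrix.mul_add, Matrix.mul_sub, Matrix.mul_sub, Matrix.mul_one,
      trace_add, trace_sub, trace_sub, ta, tb, tc, td]
    ring
  have h5 : ((Ybar⁻¹ - Ab⁻¹)ᵀ * A).trace = ((Ybar⁻¹ - Ab⁻¹) * A).trace := by
    rw [transpose_sub, hYbinvsymm, hAbinvsymm]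
  rw [ge_iff_le, hdet1, hdet2, h5]
  linarith [hconv, hPbE, h4, hlog0]
end

section
/- Let $n, m$ be positive integers, let $D$ and $\bar D$ be $n\times n$ real symmetric positive definite matrices, let $H$ and $\bar H$ be $n\times m$ real matrices, and let $P$ and $\bar P$ be $m\times m$ real symmetric positive semidefinite matrices. Set $\bar V = \bar H\,\bar P^{1/2}$, where $\bar P^{1/2}$ is the positive semidefinite square root of $\bar P$. Then $\tfrac{1}{2}\log_2\det\big(I + D^{-1}HPH^T\big) \ge \tfrac{1}{2}\log_2\det\big(I + \bar D^{-1}\bar H\bar P\bar H^T\big) - \tfrac{1}{2\ln 2}\mathrm{Tr}\big(\bar V\bar V^T\bar D^{-1}\big) + \tfrac{1}{\ln 2}\mathrm{Tr}\big(\bar V^T\bar D^{-1}H P^{1/2}\big) - \tfrac{1}{2\ln 2}\mathrm{Tr}\Big(\big(\bar D^{-1} - (\bar V\bar V^T + \bar D)^{-1}\big)^T\,(HPH^T + D)\Big)$, where $P^{1/2}$ is the positive semidefinite square root of $P$. -/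
open Matrix

open scoped ComplexOrder in
/-- The positive semidefinite square root, as defined in the older Mathlib
(`Matrix.PosSemidef.sqrt`, since removed). -/
noncomputable def Matrix.PosSemidef.sqrt {n R : Type*} [Fintype n] [RCLike R] [DecidableEq n]
    {A : Matrix n n R} (hA : A.PosSemidef) : Matrix n n R :=
  hA.1.eigenvectorUnitary.1 * diagonal ((↑) ∘ Real.sqrt ∘ hA.1.eigenvalues) *
    (star hA.1.eigenvectorUnitary : Matrix n n R)

open scoped ComplexOrder in
private lemma Matrix.PosSemidef.sqrt_mul_self {n R : Type*} [Fintype n] [RCLike R] [DecidableEq n]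
    {A : Matrix n n R} (hA : A.PosSemidef) : hA.sqrt * hA.sqrt = A := by
  have hU := Unitary.coe_star_mul_self hA.1.eigenvectorUnitary
  have hD : diagonal (((↑) ∘ Real.sqrt ∘ hA.1.eigenvalues : n → R)) *
      diagonal ((↑) ∘ Real.sqrt ∘ hA.1.eigenvalues) = diagonal ((↑) ∘ hA.1.eigenvalues) := by
    rw [diagonal_mul_diagonal]
    congr 1
    funext i
    simp only [Function.comp_apply]
    rw [← RCLike.ofReal_mul, Real.mul_self_sqrt (hA.eigenvalues_nonneg i)]
  conv_rhs => rw [hA.1.spectral_theorem, Unitary.conjStarAlgAut_apply]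
  unfold Matrix.PosSemidef.sqrt
  calc _ = (hA.1.eigenvectorUnitary : Matrix n n R) * diagonal ((↑) ∘ Real.sqrt ∘ hA.1.eigenvalues)
        * ((star hA.1.eigenvectorUnitary : Matrix n n R) * (hA.1.eigenvectorUnitary : Matrix n n R))
        * diagonal ((↑) ∘ Real.sqrt ∘ hA.1.eigenvalues)
        * (star hA.1.eigenvectorUnitary : Matrix n n R) := by simp only [Matrix.mul_assoc]
    _ = _ := by rw [hU, Matrix.mul_one, Matrix.mul_assoc _ (diagonal _) (diagonal _), hD]

open scoped ComplexOrder in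
private lemma Matrix.PosSemidef.posSemidef_sqrt {n R : Type*} [Fintype n] [RCLike R] [DecidableEq n]
    {A : Matrix n n R} (hA : A.PosSemidef) : hA.sqrt.PosSemidef := by
  unfold Matrix.PosSemidef.sqrt
  have h := (posSemidef_diagonal_iff (d := ((↑) ∘ Real.sqrt ∘ hA.1.eigenvalues : n → R))).mpr
    (fun i => by simp [RCLike.ofReal_nonneg, Real.sqrt_nonneg])
  have := h.mul_mul_conjTranspose_same (hA.1.eigenvectorUnitary : Matrix n n R)
  simpa [Matrix.star_eq_conjTranspose] using this

private lemma trace_transpose_mul_self_nonneg {k l : ℕ} (M : Matrix (Fin k) (Fin l) ℝ) :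
    0 ≤ (Mᵀ * M).trace := by
  rw [Matrix.trace]
  refine Finset.sum_nonneg fun i _ => ?_
  simp only [Matrix.diag_apply, Matrix.mul_apply, Matrix.transpose_apply]
  exact Finset.sum_nonneg fun j _ => mul_self_nonneg _

private lemma herm_transpose {k : ℕ} {M : Matrix (Fin k) (Fin k) ℝ} (h : M.IsHermitian) :
    Mᵀ = M := by
  have := h.eq
  rwa [Matrix.conjTranspose_eq_transpose_of_trivial] at this

private lemma trace_mul_psd_nonneg {k : ℕ} {A B : Matrix (Fin k) (Fin k) ℝ}
    (hA : A.PosSemidef) (hB : B.PosSemidef) : 0 ≤ (A * B).trace := by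
  set RA := hA.sqrt with hRA
  set RB := hB.sqrt with hRB
  have hAs : RA * RA = A := hA.sqrt_mul_self
  have hBs : RB * RB = B := hB.sqrt_mul_self
  have hAt : RAᵀ = RA := herm_transpose hA.posSemidef_sqrt.isHermitian
  have hBt : RBᵀ = RB := herm_transpose hB.posSemidef_sqrt.isHermitian
  have key : (RA * RB)ᵀ * (RA * RB) = RB * A * RB := by
    rw [Matrix.transpose_mul, hAt, hBt, Matrix.mul_assoc, ← Matrix.mul_assoc RA RA RB,
      hAs, ← Matrix.mul_assoc]
  have h1 : (A * B).trace = ((RA * RB)ᵀ * (RA * RB)).trace := by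
    rw [key, Matrix.trace_mul_cycle, hBs, Matrix.trace_mul_comm]
  rw [h1]
  exact trace_transpose_mul_self_nonneg _


private lemma posDef_conj {k : ℕ} {A R : Matrix (Fin k) (Fin k) ℝ} (hA : A.PosDef)
    (hRt : Rᵀ = R) (hRu : IsUnit R) : (R * A * R).PosDef := by
  have hAt : Aᵀ = A := by
    have := hA.isHermitian.eq
    rwa [Matrix.conjTranspose_eq_transpose_of_trivial] at this
  refine Matrix.PosDef.of_dotProduct_mulVec_pos ?_ fun x hx => ?_
  · show (R * A * R)ᴴ = R * A * R
    rw [Matrix.conjTranspose_eq_transpose_of_trivial, Matrix.transpose_mul,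
      Matrix.transpose_mul, hRt, hAt, Matrix.mul_assoc]
  · have hinj : Function.Injective R.mulVec := Matrix.mulVec_injective_iff_isUnit.mpr hRu
    have hRx : R *ᵥ x ≠ 0 := by
      intro h
      exact hx (hinj (by simpa using h))
    have := hA.dotProduct_mulVec_pos hRx
    have hsx : ∀ v : Fin k → ℝ, star v = v := fun v => by ext i; simp
    rw [hsx] at this ⊢
    calc (0:ℝ) < (R *ᵥ x) ⬝ᵥ (A *ᵥ (R *ᵥ x)) := this
      _ = x ⬝ᵥ ((R * A * R) *ᵥ x) := by
          rw [← Matrix.mulVec_mulVec, ← Matrix.mulVec_mulVec]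
          rw [Matrix.dotProduct_mulVec x R, ← Matrix.mulVec_transpose, hRt]


private lemma trace_log_det_le {k : ℕ} {C : Matrix (Fin k) (Fin k) ℝ} (hC : C.PosDef) :
    (k : ℝ) + Real.log C.det ≤ C.trace := by
  have hher := hC.isHermitian
  have hU : (star (hher.eigenvectorUnitary : Matrix (Fin k) (Fin k) ℝ)) *
      (hher.eigenvectorUnitary : Matrix (Fin k) (Fin k) ℝ) = 1 :=
    Unitary.coe_star_mul_self hher.eigenvectorUnitary
  have htr : C.trace = ∑ i, hher.eigenvalues i := by
    conv_lhs => rw [hher.spectral_theorem, Unitary.conjStarAlgAut_apply]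
    rw [Matrix.trace_mul_cycle, hU, Matrix.one_mul]
    simp [Matrix.trace_diagonal]
  have hdet : Real.log C.det = ∑ i, Real.log (hher.eigenvalues i) := by
    rw [hher.det_eq_prod_eigenvalues]
    simp only [RCLike.ofReal_real_eq_id, id_eq]
    exact Real.log_prod fun i _ => (hC.eigenvalues_pos i).ne'
  rw [htr, hdet]
  have : (k : ℝ) = ∑ _i : Fin k, (1 : ℝ) := by simp
  rw [this, ← Finset.sum_add_distrib]
  refine Finset.sum_le_sum fun i _ => ?_
  have h := Real.log_le_sub_one_of_pos (hC.eigenvalues_pos i)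
  linarith


private lemma trace_inv_log_det_le {k : ℕ} {A B : Matrix (Fin k) (Fin k) ℝ}
    (hA : A.PosDef) (hB : B.PosDef) :
    (k : ℝ) + Real.log A.det - Real.log B.det ≤ (A * B⁻¹).trace := by
  have hBi : B⁻¹.PosDef := hB.inv
  set R := hBi.posSemidef.sqrt with hRdef
  have hRR : R * R = B⁻¹ := hBi.posSemidef.sqrt_mul_self
  have hRt : Rᵀ = R := by
    have := hBi.posSemidef.posSemidef_sqrt.isHermitian.eq
    rwa [Matrix.conjTranspose_eq_transpose_of_trivial] at this
  have hBidet : B⁻¹.det = B.det⁻¹ := by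
    rw [Matrix.det_nonsing_inv, Ring.inverse_eq_inv']
  have hRdet : R.det ≠ 0 := by
    intro h
    have : B⁻¹.det = 0 := by rw [← hRR, Matrix.det_mul, h, mul_zero]
    rw [hBidet] at this
    exact (inv_ne_zero hB.det_pos.ne') this
  have hRu : IsUnit R := (Matrix.isUnit_iff_isUnit_det R).mpr hRdet.isUnit
  have hC : (R * A * R).PosDef := posDef_conj hA hRt hRu
  have htr : (R * A * R).trace = (A * B⁻¹).trace := by
    rw [Matrix.trace_mul_cycle, hRR, Matrix.trace_mul_comm]
  have hdet : (R * A * R).det = A.det * B.det⁻¹ := by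
    rw [Matrix.det_mul, Matrix.det_mul, ← hBidet, ← hRR, Matrix.det_mul]
    ring
  have := trace_log_det_le hC
  rw [htr, hdet, Real.log_mul hA.det_pos.ne' (inv_ne_zero hB.det_pos.ne'),
    Real.log_inv] at this
  linarith


private lemma core_lemma {n m : ℕ} {Y Yb : Matrix (Fin n) (Fin n) ℝ}
    (V Vb : Matrix (Fin n) (Fin m) ℝ) (hY : Y.PosDef) (hYb : Yb.PosDef) :
    Real.log (Vb * Vbᵀ + Yb).det - Real.log Yb.det
      - (Vb * Vbᵀ * Yb⁻¹).trace + 2 * (Vbᵀ * Yb⁻¹ * V).trace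
      - ((Yb⁻¹ - (Vb * Vbᵀ + Yb)⁻¹) * (V * Vᵀ + Y)).trace
    ≤ Real.log (V * Vᵀ + Y).det - Real.log Y.det := by
  set S := V * Vᵀ + Y with hSdef
  set Sb := Vb * Vbᵀ + Yb with hSbdef
  -- basic PSD/PD facts
  have hVV : (V * Vᵀ).PosSemidef := by
    have := Matrix.posSemidef_self_mul_conjTranspose V
    rwa [Matrix.conjTranspose_eq_transpose_of_trivial] at this
  have hVVb : (Vb * Vbᵀ).PosSemidef := by
    have := Matrix.posSemidef_self_mul_conjTranspose Vb
    rwa [Matrix.conjTranspose_eq_transpose_of_trivial] at this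
  have hS : S.PosDef := Matrix.PosDef.posSemidef_add hVV hY
  have hSb : Sb.PosDef := Matrix.PosDef.posSemidef_add hVVb hYb
  have hYdu : IsUnit Y.det := hY.det_pos.ne'.isUnit
  have hYbdu : IsUnit Yb.det := hYb.det_pos.ne'.isUnit
  have hSdu : IsUnit S.det := hS.det_pos.ne'.isUnit
  have hSbdu : IsUnit Sb.det := hSb.det_pos.ne'.isUnit
  set W := (1 : Matrix (Fin m) (Fin m) ℝ) + Vᵀ * Y⁻¹ * V with hWdef
  set Wb := (1 : Matrix (Fin m) (Fin m) ℝ) + Vbᵀ * Yb⁻¹ * Vb with hWbdef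
  have hQ : (Vᵀ * Y⁻¹ * V).PosSemidef := by
    have := (hY.inv.posSemidef).conjTranspose_mul_mul_same V
    rwa [Matrix.conjTranspose_eq_transpose_of_trivial] at this
  have hQb : (Vbᵀ * Yb⁻¹ * Vb).PosSemidef := by
    have := (hYb.inv.posSemidef).conjTranspose_mul_mul_same Vb
    rwa [Matrix.conjTranspose_eq_transpose_of_trivial] at this
  have hW : W.PosDef := Matrix.PosDef.one.add_posSemidef hQ
  have hWb : Wb.PosDef := Matrix.PosDef.one.add_posSemidef hQb
  have hWdu : IsUnit W.det := hW.det_pos.ne'.isUnit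
  -- symmetry facts
  have hYt : Yᵀ = Y := herm_transpose hY.isHermitian
  have hYbt : Ybᵀ = Yb := herm_transpose hYb.isHermitian
  have hYit : (Y⁻¹)ᵀ = Y⁻¹ := by rw [Matrix.transpose_nonsing_inv, hYt]
  have hYbit : (Yb⁻¹)ᵀ = Yb⁻¹ := by rw [Matrix.transpose_nonsing_inv, hYbt]
  have hSit : (S⁻¹)ᵀ = S⁻¹ := by
    rw [Matrix.transpose_nonsing_inv, herm_transpose hS.isHermitian]
  have hSbit : (Sb⁻¹)ᵀ = Sb⁻¹ := by
    rw [Matrix.transpose_nonsing_inv, herm_transpose hSb.isHermitian]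
  have hWbt : Wbᵀ = Wb := herm_transpose hWb.isHermitian
  -- identity: W * Vᵀ = Vᵀ * Y⁻¹ * S
  have hWV : W * Vᵀ = Vᵀ * Y⁻¹ * S := by
    rw [hWdef, hSdef, Matrix.add_mul, Matrix.one_mul, Matrix.mul_add]
    rw [Matrix.mul_assoc (Vᵀ * Y⁻¹) V Vᵀ, Matrix.mul_assoc Vᵀ Y⁻¹ Y,
      Matrix.nonsing_inv_mul Y hYdu, Matrix.mul_one, ← Matrix.mul_assoc]
    exact (add_comm _ _)
  have hWVb : Wb * Vbᵀ = Vbᵀ * Yb⁻¹ * Sb := by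
    rw [hWbdef, hSbdef, Matrix.add_mul, Matrix.one_mul, Matrix.mul_add]
    rw [Matrix.mul_assoc (Vbᵀ * Yb⁻¹) Vb Vbᵀ, Matrix.mul_assoc Vbᵀ Yb⁻¹ Yb,
      Matrix.nonsing_inv_mul Yb hYbdu, Matrix.mul_one, ← Matrix.mul_assoc]
    exact (add_comm _ _)
  -- identity: W⁻¹ = 1 - Vᵀ * S⁻¹ * V
  have hWright : W * (1 - Vᵀ * S⁻¹ * V) = 1 := by
    rw [Matrix.mul_sub, Matrix.mul_one, ← Matrix.mul_assoc, ← Matrix.mul_assoc, hWV]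
    rw [Matrix.mul_assoc (Vᵀ * Y⁻¹) S S⁻¹, Matrix.mul_nonsing_inv S hSdu, Matrix.mul_one]
    rw [hWdef]
    abel
  have hWinv : Vᵀ * S⁻¹ * V = 1 - W⁻¹ := by
    rw [Matrix.inv_eq_right_inv hWright]
    abel
  -- identity: Wb * Vbᵀ * Sb⁻¹ = Vbᵀ * Yb⁻¹
  have hid2 : Wb * Vbᵀ * Sb⁻¹ = Vbᵀ * Yb⁻¹ := by
    rw [hWVb, Matrix.mul_nonsing_inv_cancel_right _ _ hSbdu]
  -- identity: Sb⁻¹ * Vb * Wb = Yb⁻¹ * Vb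
  have hid2' : Sb⁻¹ * Vb * Wb = Yb⁻¹ * Vb := by
    have := congrArg Matrix.transpose hid2
    simp only [Matrix.transpose_mul, Matrix.transpose_transpose, hSbit, hYbit, hWbt] at this
    rwa [← Matrix.mul_assoc] at this
  -- identity: Sb⁻¹ * Vb * Vbᵀ * Yb⁻¹ = Yb⁻¹ - Sb⁻¹
  have hid3 : Sb⁻¹ * Vb * Vbᵀ * Yb⁻¹ = Yb⁻¹ - Sb⁻¹ := by
    have hVbVb : Vb * Vbᵀ = Sb - Yb := by rw [hSbdef]; abel
    calc Sb⁻¹ * Vb * Vbᵀ * Yb⁻¹ = Sb⁻¹ * (Vb * Vbᵀ) * Yb⁻¹ := by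
          rw [Matrix.mul_assoc Sb⁻¹ Vb Vbᵀ]
      _ = Sb⁻¹ * (Sb - Yb) * Yb⁻¹ := by rw [hVbVb]
      _ = Yb⁻¹ - Sb⁻¹ := by
          rw [Matrix.mul_sub, Matrix.nonsing_inv_mul Sb hSbdu, Matrix.sub_mul,
            Matrix.one_mul, Matrix.mul_assoc, Matrix.mul_nonsing_inv Yb hYbdu,
            Matrix.mul_one]
  -- the quadratic expansion
  set A := Sb⁻¹ * Vb - S⁻¹ * V with hAdef
  have hAt : Aᵀ = Vbᵀ * Sb⁻¹ - Vᵀ * S⁻¹ := by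
    simp only [hAdef, Matrix.transpose_sub, Matrix.transpose_mul, hSbit, hSit]
  have hEpsd : (Aᵀ * S * A).PosSemidef := by
    have := hS.posSemidef.conjTranspose_mul_mul_same A
    rwa [Matrix.conjTranspose_eq_transpose_of_trivial] at this
  have hTr0 : 0 ≤ (Wb * (Aᵀ * S * A)).trace := trace_mul_psd_nonneg hWb.posSemidef hEpsd
  have cS1 : ∀ (X : Matrix (Fin n) (Fin m) ℝ), S * (S⁻¹ * X) = X := fun X => by
    rw [← Matrix.mul_assoc, Matrix.mul_nonsing_inv S hSdu, Matrix.one_mul]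
  have cS2 : ∀ (X : Matrix (Fin n) (Fin m) ℝ), S⁻¹ * (S * X) = X := fun X => by
    rw [← Matrix.mul_assoc, Matrix.nonsing_inv_mul S hSdu, Matrix.one_mul]
  have hE : Aᵀ * S * A =
      Vbᵀ * Sb⁻¹ * S * Sb⁻¹ * Vb - Vbᵀ * Sb⁻¹ * V - Vᵀ * Sb⁻¹ * Vb + Vᵀ * S⁻¹ * V := by
    rw [hAt, hAdef]
    simp only [Matrix.sub_mul, Matrix.mul_sub, Matrix.mul_assoc, cS1, cS2]
    abel
  -- trace computations for the four terms
  have hT1 : (Wb * (Vbᵀ * Sb⁻¹ * S * Sb⁻¹ * Vb)).trace = ((Yb⁻¹ - Sb⁻¹) * S).trace := by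
    have e1 : Wb * (Vbᵀ * Sb⁻¹ * S * Sb⁻¹ * Vb) = Vbᵀ * Yb⁻¹ * S * Sb⁻¹ * Vb := by
      simp only [← Matrix.mul_assoc]
      rw [hid2]
    rw [e1, Matrix.trace_mul_comm (Vbᵀ * Yb⁻¹ * S * Sb⁻¹) Vb]
    rw [show Vb * (Vbᵀ * Yb⁻¹ * S * Sb⁻¹) = (Vb * Vbᵀ * Yb⁻¹ * S) * Sb⁻¹ by
      simp only [← Matrix.mul_assoc]]
    rw [Matrix.trace_mul_comm]
    rw [show Sb⁻¹ * (Vb * Vbᵀ * Yb⁻¹ * S) = (Sb⁻¹ * Vb * Vbᵀ * Yb⁻¹) * S by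
      simp only [← Matrix.mul_assoc]]
    rw [hid3]
  have hT2 : (Wb * (Vbᵀ * Sb⁻¹ * V)).trace = (Vbᵀ * Yb⁻¹ * V).trace := by
    rw [show Wb * (Vbᵀ * Sb⁻¹ * V) = (Wb * Vbᵀ * Sb⁻¹) * V by simp only [← Matrix.mul_assoc]]
    rw [hid2]
  have hT3 : (Wb * (Vᵀ * Sb⁻¹ * Vb)).trace = (Vbᵀ * Yb⁻¹ * V).trace := by
    rw [show Wb * (Vᵀ * Sb⁻¹ * Vb) = Wb * Vᵀ * (Sb⁻¹ * Vb) by simp only [← Matrix.mul_assoc]]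
    rw [Matrix.trace_mul_comm (Wb * Vᵀ) (Sb⁻¹ * Vb)]
    rw [show Sb⁻¹ * Vb * (Wb * Vᵀ) = (Sb⁻¹ * Vb * Wb) * Vᵀ by simp only [← Matrix.mul_assoc]]
    rw [hid2']
    rw [← Matrix.trace_transpose (Yb⁻¹ * Vb * Vᵀ)]
    rw [show (Yb⁻¹ * Vb * Vᵀ)ᵀ = V * (Vbᵀ * Yb⁻¹) by
      simp only [Matrix.transpose_mul, Matrix.transpose_transpose, hYbit, Matrix.mul_assoc]]
    rw [Matrix.trace_mul_comm V (Vbᵀ * Yb⁻¹), Matrix.mul_assoc]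
  have hT4 : (Wb * (Vᵀ * S⁻¹ * V)).trace = Wb.trace - (Wb * W⁻¹).trace := by
    rw [hWinv, Matrix.mul_sub, Matrix.mul_one, Matrix.trace_sub]
  -- assemble the quadratic inequality
  have hExp : (Wb * (Aᵀ * S * A)).trace
      = ((Yb⁻¹ - Sb⁻¹) * S).trace - 2 * (Vbᵀ * Yb⁻¹ * V).trace
        + Wb.trace - (Wb * W⁻¹).trace := by
    rw [hE]
    simp only [Matrix.mul_sub, Matrix.mul_add, Matrix.trace_sub, Matrix.trace_add]
    rw [hT1, hT2, hT3, hT4]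
    ring
  have ineq1 : 0 ≤ ((Yb⁻¹ - Sb⁻¹) * S).trace - 2 * (Vbᵀ * Yb⁻¹ * V).trace
      + Wb.trace - (Wb * W⁻¹).trace := by rw [← hExp]; exact hTr0
  -- trace of Wb
  have hWbtr : Wb.trace = (m : ℝ) + (Vb * Vbᵀ * Yb⁻¹).trace := by
    rw [hWbdef, Matrix.trace_add, Matrix.trace_one]
    simp only [Fintype.card_fin]
    congr 1
    rw [Matrix.trace_mul_cycle Vbᵀ Yb⁻¹ Vb]
  -- key eigenvalue inequality
  have ineq2 : (m : ℝ) + Real.log Wb.det - Real.log W.det ≤ (Wb * W⁻¹).trace :=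
    trace_inv_log_det_le hWb hW
  -- det factorizations
  have hdetS : Real.log S.det = Real.log Y.det + Real.log W.det := by
    have h1 : Y * (1 + Y⁻¹ * (V * Vᵀ)) = S := by
      rw [Matrix.mul_add, Matrix.mul_one, Matrix.mul_nonsing_inv_cancel_left _ _ hYdu,
        hSdef]
      abel
    have h2 : S.det = Y.det * W.det := by
      rw [← h1, Matrix.det_mul]
      congr 1
      rw [show (1 : Matrix (Fin n) (Fin n) ℝ) + Y⁻¹ * (V * Vᵀ) = 1 + (Y⁻¹ * V) * Vᵀ by
        rw [Matrix.mul_assoc]]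
      rw [Matrix.det_one_add_mul_comm, hWdef, ← Matrix.mul_assoc]
    rw [h2, Real.log_mul hY.det_pos.ne' hW.det_pos.ne']
  have hdetSb : Real.log Sb.det = Real.log Yb.det + Real.log Wb.det := by
    have h1 : Yb * (1 + Yb⁻¹ * (Vb * Vbᵀ)) = Sb := by
      rw [Matrix.mul_add, Matrix.mul_one, Matrix.mul_nonsing_inv_cancel_left _ _ hYbdu,
        hSbdef]
      abel
    have h2 : Sb.det = Yb.det * Wb.det := by
      rw [← h1, Matrix.det_mul]
      congr 1
      rw [show (1 : Matrix (Fin n) (Fin n) ℝ) + Yb⁻¹ * (Vb * Vbᵀ) = 1 + (Yb⁻¹ * Vb) * Vbᵀ by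
        rw [Matrix.mul_assoc]]
      rw [Matrix.det_one_add_mul_comm, hWbdef, ← Matrix.mul_assoc]
    rw [h2, Real.log_mul hYb.det_pos.ne' hWb.det_pos.ne']
  linarith

/-- Corollary 1 of the paper: concave lower bound (surrogate rate) on
`½ log₂ det (I + D⁻¹ H P Hᵀ)`, obtained from Lemma 2 with
`V = H P^{1/2}`, `Y = D`, `V̄ = H̄ P̄^{1/2}`, `Ȳ = D̄`. -/
theorem rate_concave_lower_bound {n m : ℕ} (hn : 0 < n) (hm : 0 < m)
    (D Dbar : Matrix (Fin n) (Fin n) ℝ) (H Hbar : Matrix (Fin n) (Fin m) ℝ)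
    (P Pbar : Matrix (Fin m) (Fin m) ℝ)
    (hD : D.PosDef) (hDbar : Dbar.PosDef)
    (hP : P.PosSemidef) (hPbar : Pbar.PosSemidef) :
    (1 / 2 : ℝ) * Real.logb 2 (1 + D⁻¹ * (H * P * Hᵀ)).det ≥
      (1 / 2 : ℝ) * Real.logb 2 (1 + Dbar⁻¹ * (Hbar * Pbar * Hbarᵀ)).det
        - (1 / (2 * Real.log 2)) *
            ((Hbar * hPbar.sqrt) * (Hbar * hPbar.sqrt)ᵀ * Dbar⁻¹).trace
        + (1 / Real.log 2) *
            ((Hbar * hPbar.sqrt)ᵀ * Dbar⁻¹ * (H * hP.sqrt)).trace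
        - (1 / (2 * Real.log 2)) *
            ((Dbar⁻¹ - ((Hbar * hPbar.sqrt) * (Hbar * hPbar.sqrt)ᵀ + Dbar)⁻¹)ᵀ *
              (H * P * Hᵀ + D)).trace := by
  set V := H * hP.sqrt with hVdef
  set Vb := Hbar * hPbar.sqrt with hVbdef
  have hPs : hP.sqrtᵀ = hP.sqrt := herm_transpose hP.posSemidef_sqrt.isHermitian
  have hPbs : hPbar.sqrtᵀ = hPbar.sqrt := herm_transpose hPbar.posSemidef_sqrt.isHermitian
  have hVVt : V * Vᵀ = H * P * Hᵀ := by
    rw [hVdef, Matrix.transpose_mul, hPs,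
      show H * hP.sqrt * (hP.sqrt * Hᵀ) = H * (hP.sqrt * hP.sqrt) * Hᵀ by
        simp only [Matrix.mul_assoc],
      hP.sqrt_mul_self]
  have hVVbt : Vb * Vbᵀ = Hbar * Pbar * Hbarᵀ := by
    rw [hVbdef, Matrix.transpose_mul, hPbs,
      show Hbar * hPbar.sqrt * (hPbar.sqrt * Hbarᵀ) = Hbar * (hPbar.sqrt * hPbar.sqrt) * Hbarᵀ by
        simp only [Matrix.mul_assoc],
      hPbar.sqrt_mul_self]
  rw [hVVbt]
  -- key inequality
  have key := core_lemma (Y := D) (Yb := Dbar) V Vb hD hDbar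
  rw [hVVt, hVVbt] at key
  -- positive definiteness of the sums
  have hHPH : (H * P * Hᵀ).PosSemidef := by
    rw [← hVVt]
    have := Matrix.posSemidef_self_mul_conjTranspose V
    rwa [Matrix.conjTranspose_eq_transpose_of_trivial] at this
  have hHPHb : (Hbar * Pbar * Hbarᵀ).PosSemidef := by
    rw [← hVVbt]
    have := Matrix.posSemidef_self_mul_conjTranspose Vb
    rwa [Matrix.conjTranspose_eq_transpose_of_trivial] at this
  have hSPD : (H * P * Hᵀ + D).PosDef := Matrix.PosDef.posSemidef_add hHPH hD
  have hSbPD : (Hbar * Pbar * Hbarᵀ + Dbar).PosDef := Matrix.PosDef.posSemidef_add hHPHb hDbar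
  -- remove the transpose on the symmetric matrix
  have hLsym : (Dbar⁻¹ - (Hbar * Pbar * Hbarᵀ + Dbar)⁻¹)ᵀ
      = Dbar⁻¹ - (Hbar * Pbar * Hbarᵀ + Dbar)⁻¹ := by
    rw [Matrix.transpose_sub, Matrix.transpose_nonsing_inv, Matrix.transpose_nonsing_inv,
      herm_transpose hDbar.isHermitian, herm_transpose hSbPD.isHermitian]
  rw [hLsym]
  -- determinant conversions
  have hdet1 : (1 + D⁻¹ * (H * P * Hᵀ)).det = (H * P * Hᵀ + D).det / D.det := by
    have hDu : IsUnit D.det := hD.det_pos.ne'.isUnit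
    have h1 : D⁻¹ * (H * P * Hᵀ + D) = 1 + D⁻¹ * (H * P * Hᵀ) := by
      rw [Matrix.mul_add, Matrix.nonsing_inv_mul D hDu]
      abel
    rw [← h1, Matrix.det_mul, Matrix.det_nonsing_inv, Ring.inverse_eq_inv']
    field_simp
  have hdet2 : (1 + Dbar⁻¹ * (Hbar * Pbar * Hbarᵀ)).det
      = (Hbar * Pbar * Hbarᵀ + Dbar).det / Dbar.det := by
    have hDu : IsUnit Dbar.det := hDbar.det_pos.ne'.isUnit
    have h1 : Dbar⁻¹ * (Hbar * Pbar * Hbarᵀ + Dbar) = 1 + Dbar⁻¹ * (Hbar * Pbar * Hbarᵀ) := by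
      rw [Matrix.mul_add, Matrix.nonsing_inv_mul Dbar hDu]
      abel
    rw [← h1, Matrix.det_mul, Matrix.det_nonsing_inv, Ring.inverse_eq_inv']
    field_simp
  rw [hdet1, hdet2]
  have hl : (0 : ℝ) < Real.log 2 := Real.log_pos one_lt_two
  rw [Real.logb, Real.logb, Real.log_div hSPD.det_pos.ne' hD.det_pos.ne',
    Real.log_div hSbPD.det_pos.ne' hDbar.det_pos.ne']
  rw [ge_iff_le, ← sub_nonneg]
  have heq : (1 / 2 : ℝ) * ((Real.log (H * P * Hᵀ + D).det - Real.log D.det) / Real.log 2)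
      - ((1 / 2 : ℝ) * ((Real.log (Hbar * Pbar * Hbarᵀ + Dbar).det - Real.log Dbar.det) / Real.log 2)
        - (1 / (2 * Real.log 2)) * (Hbar * Pbar * Hbarᵀ * Dbar⁻¹).trace
        + (1 / Real.log 2) * (Vbᵀ * Dbar⁻¹ * V).trace
        - (1 / (2 * Real.log 2)) *
            ((Dbar⁻¹ - (Hbar * Pbar * Hbarᵀ + Dbar)⁻¹) * (H * P * Hᵀ + D)).trace)
      = (Real.log 2)⁻¹ * (((Real.log (H * P * Hᵀ + D).det - Real.log D.det)
          - (Real.log (Hbar * Pbar * Hbarᵀ + Dbar).det - Real.log Dbar.det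
            - (Hbar * Pbar * Hbarᵀ * Dbar⁻¹).trace + 2 * (Vbᵀ * Dbar⁻¹ * V).trace
            - ((Dbar⁻¹ - (Hbar * Pbar * Hbarᵀ + Dbar)⁻¹) * (H * P * Hᵀ + D)).trace)) / 2) := by
    field_simp
  rw [heq]
  exact mul_nonneg (inv_nonneg.mpr hl.le) (by linarith)
end
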